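/- Let S_1,...,S_n be a complete set of pairwise non-isomorphic simple A-modules. For any subsets I and J of {1,...,n}: (1) T({S_i : i∈I}) = T({S_j : j∈J}) if and only if I = J; (2) the join of T({S_i : i∈I}) and T({S_j : j∈J}) in tors A equals T({S_k : k∈I∪J}); (3) their meet equals T({S_k : k∈I∩J}). In particular T(∅) is the zero torsion class and T({S_1,...,S_n}) = mod A. -/

import Mathlib

/-! Preamble: the category `mod A` of finite-dimensional right `A`-modules,
torsion(-free) classes, the complete lattice `tors A`, functorially finite
torsion classes, bricks, etc. -/

open Function

/-- A bundled finite-dimensional (i.e. finitely generated) right `A`-module,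
realized as a left module over `Aᵐᵒᵖ`. -/
structure ModA (A : Type) [Ring A] : Type 1 where
  carrier : Type
  [isAddCommGroup : AddCommGroup carrier]
  [isModule : Module Aᵐᵒᵖ carrier]
  [isFinite : Module.Finite Aᵐᵒᵖ carrier]

attribute [instance] ModA.isAddCommGroup ModA.isModule ModA.isFinite

namespace ModA

variable {A : Type} [Ring A]

instance : CoeSort (ModA A) Type := ⟨ModA.carrier⟩

end ModA

section TorsionTheory

variable {A : Type} [Ring A]

/-- A torsion class: a class of finite-dimensional right `A`-modules containing the
zero modules, closed under quotient modules and under extensions. -/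
def IsTorsionClass (T : Set (ModA A)) : Prop :=
  (∀ N : ModA A, Subsingleton N.carrier → N ∈ T) ∧
  (∀ M N : ModA A, M ∈ T → ∀ f : M.carrier →ₗ[Aᵐᵒᵖ] N.carrier, Surjective f → N ∈ T) ∧
  (∀ (X Y Z : ModA A) (f : X.carrier →ₗ[Aᵐᵒᵖ] Y.carrier) (g : Y.carrier →ₗ[Aᵐᵒᵖ] Z.carrier),
    Injective f → Surjective g → LinearMap.range f = LinearMap.ker g →
    X ∈ T → Z ∈ T → Y ∈ T)

/-- A torsion-free class: a class of finite-dimensional right `A`-modules containing the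
zero modules, closed under submodules and under extensions. -/
def IsTorsionFreeClass (F : Set (ModA A)) : Prop :=
  (∀ N : ModA A, Subsingleton N.carrier → N ∈ F) ∧
  (∀ M N : ModA A, M ∈ F → ∀ f : N.carrier →ₗ[Aᵐᵒᵖ] M.carrier, Injective f → N ∈ F) ∧
  (∀ (X Y Z : ModA A) (f : X.carrier →ₗ[Aᵐᵒᵖ] Y.carrier) (g : Y.carrier →ₗ[Aᵐᵒᵖ] Z.carrier),
    Injective f → Surjective g → LinearMap.range f = LinearMap.ker g →
    X ∈ F → Z ∈ F → Y ∈ F)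

theorem isTorsionClass_sInter {S : Set (Set (ModA A))} (h : ∀ T ∈ S, IsTorsionClass T) :
    IsTorsionClass (⋂₀ S) := by
  refine ⟨fun N hN => ?_, fun M N hM f hf => ?_, fun X Y Z f g hf hg he hX hZ => ?_⟩
  · exact Set.mem_sInter.2 fun T hT => (h T hT).1 N hN
  · exact Set.mem_sInter.2 fun T hT => (h T hT).2.1 M N (Set.mem_sInter.1 hM T hT) f hf
  · exact Set.mem_sInter.2 fun T hT =>
      (h T hT).2.2 X Y Z f g hf hg he (Set.mem_sInter.1 hX T hT) (Set.mem_sInter.1 hZ T hT)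

theorem isTorsionFreeClass_sInter {S : Set (Set (ModA A))} (h : ∀ F ∈ S, IsTorsionFreeClass F) :
    IsTorsionFreeClass (⋂₀ S) := by
  refine ⟨fun N hN => ?_, fun M N hM f hf => ?_, fun X Y Z f g hf hg he hX hZ => ?_⟩
  · exact Set.mem_sInter.2 fun T hT => (h T hT).1 N hN
  · exact Set.mem_sInter.2 fun T hT => (h T hT).2.1 M N (Set.mem_sInter.1 hM T hT) f hf
  · exact Set.mem_sInter.2 fun T hT =>
      (h T hT).2.2 X Y Z f g hf hg he (Set.mem_sInter.1 hX T hT) (Set.mem_sInter.1 hZ T hT)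

end TorsionTheory

/-- `tors A`: the poset of all torsion classes in `mod A`, ordered by inclusion. -/
def Tors (A : Type) [Ring A] : Type 1 := {T : Set (ModA A) // IsTorsionClass T}

/-- `torf A`: the poset of all torsion-free classes in `mod A`, ordered by inclusion. -/
def Torf (A : Type) [Ring A] : Type 1 := {F : Set (ModA A) // IsTorsionFreeClass F}

namespace Tors

variable {A : Type} [Ring A]

instance : PartialOrder (Tors A) := Subtype.partialOrder _

instance : InfSet (Tors A) :=
  ⟨fun S => ⟨⋂₀ (Subtype.val '' S),
    isTorsionClass_sInter (by rintro _ ⟨T, _, rfl⟩; exact T.2)⟩⟩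

/-- `tors A` is a complete lattice, with meets given by intersections. -/
instance : CompleteLattice (Tors A) :=
  completeLatticeOfInf _ (fun S =>
    ⟨fun T hT => Set.sInter_subset_of_mem ⟨T, hT, rfl⟩,
     fun L hL => Set.subset_sInter (by rintro _ ⟨T, hT, rfl⟩; exact hL hT)⟩)

end Tors

namespace Torf

variable {A : Type} [Ring A]

instance : PartialOrder (Torf A) := Subtype.partialOrder _

instance : InfSet (Torf A) :=
  ⟨fun S => ⟨⋂₀ (Subtype.val '' S),
    isTorsionFreeClass_sInter (by rintro _ ⟨T, _, rfl⟩; exact T.2)⟩⟩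

/-- `torf A` is a complete lattice, with meets given by intersections. -/
instance : CompleteLattice (Torf A) :=
  completeLatticeOfInf _ (fun S =>
    ⟨fun T hT => Set.sInter_subset_of_mem ⟨T, hT, rfl⟩,
     fun L hL => Set.subset_sInter (by rintro _ ⟨T, hT, rfl⟩; exact hL hT)⟩)

end Torf

section Defs

variable {A : Type} [Ring A]

/-- `T(C)`: the smallest torsion class containing the class `C` of modules. -/
def torsGen (C : Set (ModA A)) : Tors A := sInf {T : Tors A | C ⊆ T.1}

/-- `Fac M`: the class of all quotients of finite direct sums of copies of `M`. -/
def Fac (M : ModA A) : Set (ModA A) :=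
  {N | ∃ (k : ℕ) (f : (Fin k → M.carrier) →ₗ[Aᵐᵒᵖ] N.carrier), Surjective f}

/-- A class of modules is functorially finite (as a torsion class) when it is
of the form `Fac M`. -/
def IsFFSet (X : Set (ModA A)) : Prop := ∃ M : ModA A, X = Fac M

/-- A torsion class is functorially finite when it is of the form `Fac M`. -/
def IsFunctoriallyFinite (T : Tors A) : Prop := IsFFSet T.1

/-- The right Hom-orthogonal class `X^⊥`. -/
def rightPerp (X : Set (ModA A)) : Set (ModA A) :=
  {M | ∀ N ∈ X, ∀ f : N.carrier →ₗ[Aᵐᵒᵖ] M.carrier, f = 0}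

/-- The left Hom-orthogonal class `^⊥X`. -/
def leftPerp (X : Set (ModA A)) : Set (ModA A) :=
  {N | ∀ M ∈ X, ∀ f : N.carrier →ₗ[Aᵐᵒᵖ] M.carrier, f = 0}

/-- A brick: a nonzero module all of whose nonzero endomorphisms are isomorphisms. -/
def IsBrick (B : ModA A) : Prop :=
  Nontrivial B.carrier ∧
    ∀ f : B.carrier →ₗ[Aᵐᵒᵖ] B.carrier, f ≠ 0 → Bijective f

end Defs

/-- `f-tors A`: the poset of functorially finite torsion classes, ordered by inclusion. -/
def FTors (A : Type) [Ring A] : Type 1 := {T : Tors A // IsFunctoriallyFinite T}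

instance {A : Type} [Ring A] : PartialOrder (FTors A) := Subtype.partialOrder _

section Simples

variable (A : Type) [Ring A]

/-- The type of simple objects of `mod A`. -/
def SimpleMod : Type 1 := {S : ModA A // IsSimpleModule Aᵐᵒᵖ S.carrier}

/-- Isomorphism of simple modules, as an equivalence relation. -/
def simpleIsoSetoid : Setoid (SimpleMod A) where
  r S T := Nonempty (S.1.carrier ≃ₗ[Aᵐᵒᵖ] T.1.carrier)
  iseqv := ⟨fun _ => ⟨LinearEquiv.refl _ _⟩, fun ⟨e⟩ => ⟨e.symm⟩, fun ⟨e⟩ ⟨f⟩ => ⟨e.trans f⟩⟩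

/-- The number of isomorphism classes of simple right `A`-modules. -/
noncomputable def numSimples : ℕ := Nat.card (Quotient (simpleIsoSetoid A))

end Simples

section Lattice

/-- Upper semimodularity: if `a` and `b` both cover `a ⊓ b`, then `a ⊔ b` covers
both `a` and `b`. -/
def UpperSemimodular (α : Type*) [Lattice α] : Prop :=
  ∀ a b : α, a ⊓ b ⋖ a → a ⊓ b ⋖ b → a ⋖ a ⊔ b ∧ b ⋖ a ⊔ b

/-- Lower semimodularity: if `a ⊔ b` covers both `a` and `b`, then `a` and `b` both
cover `a ⊓ b`. -/
def LowerSemimodular (α : Type*) [Lattice α] : Prop :=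
  ∀ a b : α, a ⋖ a ⊔ b → b ⋖ a ⊔ b → a ⊓ b ⋖ a ∧ a ⊓ b ⋖ b

/-- An element `x` of a complete lattice is completely join irreducible if the join of
all elements strictly below `x` is strictly below `x`. -/
def CompletelyJoinIrred {α : Type*} [CompleteLattice α] (x : α) : Prop :=
  sSup {y | y < x} < x

end Lattice

/-- The statement that the poset `f-tors A` forms a lattice: any two functorially finite
torsion classes have a least upper bound and a greatest lower bound within `f-tors A`. -/
def FTorsIsLattice (A : Type) [Ring A] : Prop :=
  ∀ a b : FTors A, (∃ m, IsGLB {a, b} m) ∧ (∃ j, IsLUB {a, b} j)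

/-- Upper semimodularity for the poset `f-tors A`. -/
def FTorsUpperSemimodular (A : Type) [Ring A] : Prop :=
  ∀ a b m j : FTors A, IsGLB {a, b} m → IsLUB {a, b} j →
    m ⋖ a → m ⋖ b → a ⋖ j ∧ b ⋖ j

/-- Lower semimodularity for the poset `f-tors A`. -/
def FTorsLowerSemimodular (A : Type) [Ring A] : Prop :=
  ∀ a b m j : FTors A, IsGLB {a, b} m → IsLUB {a, b} j →
    a ⋖ j → b ⋖ j → m ⋖ a ∧ m ⋖ b

/-- A realization of a `K`-algebra `A` as a finite product of finite-dimensional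
local `K`-algebras. -/
structure LocalAlgebraFactorization (K : Type) [Field K] (A : Type) [Ring A] [Algebra K A] where
  m : ℕ
  B : Fin m → Type
  [ringB : ∀ i, Ring (B i)]
  [algB : ∀ i, Algebra K (B i)]
  finB : ∀ i, FiniteDimensional K (B i)
  localB : ∀ i, IsLocalRing (B i)
  equiv : A ≃ₐ[K] ∀ i, B i

/-- An indecomposable module: nonzero, and not the internal direct sum of two nonzero
submodules. -/
def IsIndecomposableModule (R M : Type*) [Ring R] [AddCommGroup M] [Module R M] : Prop :=
  Nontrivial M ∧ ∀ S T : Submodule R M, IsCompl S T → S = ⊥ ∨ T = ⊥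

/-! Auxiliary development for stmt14. -/

section Aux

variable {A : Type} [Ring A]

theorem moduleFinite_of_isNoetherian' (X : Type) [AddCommGroup X] [Module Aᵐᵒᵖ X]
    [IsNoetherian Aᵐᵒᵖ X] : Module.Finite Aᵐᵒᵖ X :=
  ⟨IsNoetherian.noetherian ⊤⟩

variable [IsNoetherianRing Aᵐᵒᵖ]

/-- A submodule of a `ModA`, as a `ModA`. -/
@[reducible] def ModA.sub (M : ModA A) (N : Submodule Aᵐᵒᵖ M.carrier) : ModA A :=
  letI : Module.Finite Aᵐᵒᵖ ↥N := moduleFinite_of_isNoetherian' _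
  { carrier := ↥N }

/-- A quotient of a `ModA`, as a `ModA`. -/
@[reducible] def ModA.quot (M : ModA A) (N : Submodule Aᵐᵒᵖ M.carrier) : ModA A :=
  letI : Module.Finite Aᵐᵒᵖ (M.carrier ⧸ N) := moduleFinite_of_isNoetherian' _
  { carrier := M.carrier ⧸ N }

/-- `X` is a subquotient of `M`. -/
def SubQuot (X M : ModA A) : Prop :=
  ∃ (W : ModA A) (f : W.carrier →ₗ[Aᵐᵒᵖ] M.carrier) (g : W.carrier →ₗ[Aᵐᵒᵖ] X.carrier),
    Function.Injective f ∧ Function.Surjective g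

/-- The modules all of whose simple subquotients belong to `D`. -/
def simpClosed (D : Set (ModA A)) : Set (ModA A) :=
  {M | ∀ X : ModA A, IsSimpleModule Aᵐᵒᵖ X.carrier → SubQuot X M → X ∈ D}

theorem isTorsionClass_simpClosed (D : Set (ModA A)) : IsTorsionClass (simpClosed D) := by
  refine ⟨?_, ?_, ?_⟩
  · rintro N hN X hX ⟨W, f, g, hf, hg⟩
    haveI : Subsingleton W.carrier := hf.subsingleton
    haveI : Subsingleton X.carrier := hg.subsingleton
    haveI := hX
    exact absurd (IsSimpleModule.nontrivial Aᵐᵒᵖ X.carrier) (not_nontrivial _)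
  · rintro M N hM π hπ X hX ⟨W, f, g, hf, hg⟩
    apply hM X hX
    set W' : Submodule Aᵐᵒᵖ M.carrier := Submodule.comap π (LinearMap.range f) with hW'
    have hmem : ∀ w : ↥W', π (W'.subtype w) ∈ LinearMap.range f := fun w => w.2
    let φ : ↥W' →ₗ[Aᵐᵒᵖ] ↥(LinearMap.range f) :=
      LinearMap.codRestrict (LinearMap.range f) (π.comp W'.subtype) hmem
    have hφ : Function.Surjective φ := by
      rintro ⟨y, hy⟩
      obtain ⟨m, hm⟩ := hπ y
      have hmW : m ∈ W' := Submodule.mem_comap.mpr (hm.symm ▸ hy)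
      exact ⟨⟨m, hmW⟩, Subtype.ext hm⟩
    refine ⟨ModA.sub M W', W'.subtype,
      g.comp ((LinearEquiv.ofInjective f hf).symm.toLinearMap.comp φ), W'.injective_subtype, ?_⟩
    exact hg.comp ((LinearEquiv.ofInjective f hf).symm.surjective.comp hφ)
  · rintro X Y Z f g hf hg he hX hZ Q hQ ⟨W, ι, p, hι, hp⟩
    haveI := hQ
    set W' : Submodule Aᵐᵒᵖ W.carrier := LinearMap.ker (g.comp ι) with hW'
    rcases eq_bot_or_eq_top (Submodule.map p W') with hbot | htop
    · have hle : W' ≤ LinearMap.ker p := by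
        intro w hw
        have h1 : p w ∈ Submodule.map p W' := Submodule.mem_map_of_mem hw
        rw [hbot] at h1
        exact LinearMap.mem_ker.2 ((Submodule.mem_bot _).1 h1)
      apply hZ Q hQ
      refine ⟨ModA.quot W W', W'.liftQ (g.comp ι) le_rfl, W'.liftQ p hle, ?_, ?_⟩
      · exact LinearMap.ker_eq_bot.mp (Submodule.ker_liftQ_eq_bot W' (g.comp ι) le_rfl le_rfl)
      · intro q
        obtain ⟨w, rfl⟩ := hp q
        exact ⟨Submodule.Quotient.mk w, rfl⟩
    · apply hX Q hQ
      have hmem : ∀ w : ↥W', ι (W'.subtype w) ∈ LinearMap.range f := by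
        intro w
        rw [he]
        exact LinearMap.mem_ker.2 (LinearMap.mem_ker.mp w.2)
      let φ : ↥W' →ₗ[Aᵐᵒᵖ] ↥(LinearMap.range f) :=
        LinearMap.codRestrict (LinearMap.range f) (ι.comp W'.subtype) hmem
      have hφinj : Function.Injective φ := by
        intro a b hab
        exact Subtype.ext (hι (congrArg Subtype.val hab))
      refine ⟨ModA.sub W W',
        ((LinearEquiv.ofInjective f hf).symm.toLinearMap.comp φ), p.comp W'.subtype,
        (LinearEquiv.ofInjective f hf).symm.injective.comp hφinj, ?_⟩
      intro q
      have h1 : q ∈ Submodule.map p W' := htop ▸ Submodule.mem_top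
      obtain ⟨w, hw, rfl⟩ := h1
      exact ⟨⟨w, hw⟩, rfl⟩

/-- A simple subquotient of a simple module is isomorphic to it. -/
theorem subquot_simple {X M : ModA A} (hM : IsSimpleModule Aᵐᵒᵖ M.carrier)
    (hX : IsSimpleModule Aᵐᵒᵖ X.carrier) (h : SubQuot X M) :
    Nonempty (X.carrier ≃ₗ[Aᵐᵒᵖ] M.carrier) := by
  obtain ⟨W, f, p, hf, hp⟩ := h
  haveI := hM; haveI := hX
  haveI := IsSimpleModule.nontrivial Aᵐᵒᵖ X.carrier
  rcases eq_bot_or_eq_top (LinearMap.range f) with hr | hr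
  · exfalso
    haveI hWs : Subsingleton W.carrier := by
      constructor
      intro a b
      apply hf
      have ha : f a ∈ LinearMap.range f := LinearMap.mem_range_self f a
      have hb : f b ∈ LinearMap.range f := LinearMap.mem_range_self f b
      rw [hr] at ha hb
      rw [(Submodule.mem_bot _).1 ha, (Submodule.mem_bot _).1 hb]
    haveI : Subsingleton X.carrier := hp.subsingleton
    exact absurd ‹Nontrivial X.carrier› (not_nontrivial _)
  · have hfsurj : Function.Surjective f := LinearMap.range_eq_top.mp hr
    let e := LinearEquiv.ofBijective f ⟨hf, hfsurj⟩
    let p' : M.carrier →ₗ[Aᵐᵒᵖ] X.carrier := p.comp e.symm.toLinearMap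
    have hp' : Function.Surjective p' := hp.comp e.symm.surjective
    rcases eq_bot_or_eq_top (LinearMap.ker p') with hk | hk
    · exact ⟨(LinearEquiv.ofBijective p' ⟨LinearMap.ker_eq_bot.mp hk, hp'⟩).symm⟩
    · exfalso
      have hall : ∀ x : X.carrier, x = 0 := by
        intro x
        obtain ⟨m, rfl⟩ := hp' x
        exact LinearMap.mem_ker.mp (hk.ge Submodule.mem_top)
      obtain ⟨a, b, hab⟩ := ‹Nontrivial X.carrier›
      exact hab ((hall a).trans (hall b).symm)

/-- A torsion class closed under isomorphism. -/
theorem mem_of_linearEquiv {T : Set (ModA A)} (hT : IsTorsionClass T) {M N : ModA A}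
    (hM : M ∈ T) (e : M.carrier ≃ₗ[Aᵐᵒᵖ] N.carrier) : N ∈ T :=
  hT.2.1 M N hM e.toLinearMap e.surjective

/-- Generation: a module all of whose simple subquotients lie in a torsion class `T`
itself lies in `T`. -/
theorem mem_torsionClass_of_simple_subquot [IsArtinianRing Aᵐᵒᵖ]
    {T : Set (ModA A)} (hT : IsTorsionClass T) (M : ModA A)
    (hsq : ∀ X : ModA A, IsSimpleModule Aᵐᵒᵖ X.carrier → SubQuot X M → X ∈ T) : M ∈ T := by
  have key : ∀ N : Submodule Aᵐᵒᵖ M.carrier, ModA.sub M N ∈ T := by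
    intro N
    induction N using WellFoundedLT.induction with
    | _ N IH =>
      rcases eq_or_ne N ⊥ with rfl | hN
      · refine hT.1 _ ?_
        constructor
        intro a b
        refine Subtype.ext ?_
        rw [(Submodule.mem_bot _).1 a.2, (Submodule.mem_bot _).1 b.2]
      · obtain ⟨P, hPN, hPmax⟩ : ∃ P, P < N ∧ ∀ Q ∈ {Q | Q < N}, ¬ P < Q := by
          have hwf : WellFounded ((· > ·) : Submodule Aᵐᵒᵖ M.carrier →
              Submodule Aᵐᵒᵖ M.carrier → Prop) := IsWellFounded.wf
          obtain ⟨P, hP, hmax⟩ := hwf.has_min {Q | Q < N} ⟨⊥, bot_lt_iff_ne_bot.2 hN⟩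
          exact ⟨P, hP, hmax⟩
        have hcov : P ⋖ N := ⟨hPN, fun {Q} h1 h2 => hPmax Q h2 h1⟩
        have hsimp : IsSimpleModule Aᵐᵒᵖ (↥N ⧸ Submodule.comap N.subtype P) :=
          (covBy_iff_quot_is_simple hPN.le).mp hcov
        have hZ : ModA.quot (ModA.sub M N) (Submodule.comap N.subtype P) ∈ T := by
          apply hsq _ hsimp
          exact ⟨ModA.sub M N, N.subtype, (Submodule.comap N.subtype P).mkQ,
            N.injective_subtype, Submodule.mkQ_surjective _⟩
        refine hT.2.2 (ModA.sub M P) (ModA.sub M N)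
          (ModA.quot (ModA.sub M N) (Submodule.comap N.subtype P))
          (Submodule.inclusion hPN.le) (Submodule.comap N.subtype P).mkQ
          (Submodule.inclusion_injective _) (Submodule.mkQ_surjective _) ?_ (IH P hPN) hZ
        rw [Submodule.range_inclusion, Submodule.ker_mkQ]
  exact hT.2.1 (ModA.sub M ⊤) M (key ⊤) (Submodule.topEquiv : ↥(⊤ : Submodule Aᵐᵒᵖ M.carrier)
    ≃ₗ[Aᵐᵒᵖ] M.carrier).toLinearMap Submodule.topEquiv.surjective

end Aux

section TorsGenLemmas

variable {A : Type} [Ring A]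

theorem Tors.le_def {a b : Tors A} : a ≤ b ↔ a.1 ⊆ b.1 := Iff.rfl

theorem subset_torsGen (C : Set (ModA A)) : C ⊆ (torsGen C).1 := fun x hx =>
  Set.mem_sInter.2 (by rintro _ ⟨T, hT, rfl⟩; exact hT hx)

theorem mem_torsGen_of_forall {C : Set (ModA A)} {M : ModA A}
    (h : ∀ T : Tors A, C ⊆ T.1 → M ∈ T.1) : M ∈ (torsGen C).1 :=
  Set.mem_sInter.2 (by rintro _ ⟨T, hT, rfl⟩; exact h T hT)

theorem torsGen_le {C : Set (ModA A)} {T : Tors A} (h : C ⊆ T.1) : torsGen C ≤ T :=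
  sInf_le h

theorem torsGen_mono {C D : Set (ModA A)} (h : C ⊆ D) : torsGen C ≤ torsGen D :=
  torsGen_le (h.trans (subset_torsGen D))

end TorsGenLemmas
/-- for a complete set `S_1, ..., S_n` of pairwise non-isomorphic simple
`A`-modules and subsets `I, J ⊆ {1, ..., n}`: `T({S_i : i ∈ I}) = T({S_j : j ∈ J})` iff
`I = J`; the join (resp. meet) of `T({S_i : i ∈ I})` and `T({S_j : j ∈ J})` is
`T({S_k : k ∈ I ∪ J})` (resp. `T({S_k : k ∈ I ∩ J})`); moreover `T(∅)` is the zero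
torsion class and `T({S_1, ..., S_n}) = mod A`. -/
theorem stmt14 (K A : Type) [Field K] [IsAlgClosed K] [Ring A] [Algebra K A]
    [FiniteDimensional K A]
    (n : ℕ) (S : Fin n → ModA A)
    (hsimple : ∀ i, IsSimpleModule Aᵐᵒᵖ (S i).carrier)
    (hpairwise : ∀ i j, i ≠ j → IsEmpty ((S i).carrier ≃ₗ[Aᵐᵒᵖ] (S j).carrier))
    (hcomplete : ∀ M : ModA A, IsSimpleModule Aᵐᵒᵖ M.carrier →
      ∃ i, Nonempty (M.carrier ≃ₗ[Aᵐᵒᵖ] (S i).carrier)) :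
    (∀ I J : Set (Fin n), torsGen (S '' I) = torsGen (S '' J) ↔ I = J) ∧
    (∀ I J : Set (Fin n),
      torsGen (S '' I) ⊔ torsGen (S '' J) = torsGen (S '' (I ∪ J))) ∧
    (∀ I J : Set (Fin n),
      torsGen (S '' I) ⊓ torsGen (S '' J) = torsGen (S '' (I ∩ J))) ∧
    (torsGen (∅ : Set (ModA A))).1 = {M : ModA A | Subsingleton M.carrier} ∧
    (torsGen (Set.range S)).1 = Set.univ := by
  haveI : Module.Finite K Aᵐᵒᵖ := Module.Finite.equiv (MulOpposite.opLinearEquiv K (M := A))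
  haveI : IsNoetherianRing Aᵐᵒᵖ := isNoetherian_of_tower K inferInstance
  haveI : IsArtinianRing Aᵐᵒᵖ := IsArtinianRing.of_finite K Aᵐᵒᵖ
  set D : Set (Fin n) → Set (ModA A) := fun I =>
    {X : ModA A | ∃ i ∈ I, Nonempty (X.carrier ≃ₗ[Aᵐᵒᵖ] (S i).carrier)} with hD
  have hTI : ∀ I : Set (Fin n), (torsGen (S '' I)).1 ⊆ simpClosed (D I) := by
    intro I
    refine Tors.le_def.mp (torsGen_le (T := ⟨simpClosed (D I), isTorsionClass_simpClosed (D I)⟩) ?_)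
    rintro _ ⟨i, hi, rfl⟩
    intro X hX hsub
    exact ⟨i, hi, subquot_simple (hsimple i) hX hsub⟩
  have hgen : ∀ (I : Set (Fin n)) (M : ModA A),
      M ∈ simpClosed (D I) → M ∈ (torsGen (S '' I)).1 := by
    intro I M hM
    refine mem_torsionClass_of_simple_subquot (torsGen (S '' I)).2 M ?_
    intro X hX hsub
    obtain ⟨i, hi, ⟨e⟩⟩ := hM X hX hsub
    exact mem_of_linearEquiv (torsGen (S '' I)).2 (subset_torsGen _ ⟨i, hi, rfl⟩) e.symm
  have hmemI : ∀ (I : Set (Fin n)) (i : Fin n), i ∈ I → ∀ J : Set (Fin n),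
      torsGen (S '' I) ≤ torsGen (S '' J) → i ∈ J := by
    intro I i hi J hle
    have h1 : S i ∈ (torsGen (S '' J)).1 := Tors.le_def.mp hle (subset_torsGen _ ⟨i, hi, rfl⟩)
    have h2 := hTI J h1 (S i) (hsimple i)
      ⟨S i, LinearMap.id, LinearMap.id, fun a b h => h, fun a => ⟨a, rfl⟩⟩
    obtain ⟨j, hj, ⟨e⟩⟩ := h2
    by_cases hij : i = j
    · exact hij ▸ hj
    · exact ((hpairwise i j hij).false e).elim
  refine ⟨?_, ?_, ?_, ?_, ?_⟩
  · intro I J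
    constructor
    · intro h
      apply Set.Subset.antisymm
      · intro i hi; exact hmemI I i hi J h.le
      · intro j hj; exact hmemI J j hj I h.ge
    · rintro rfl; rfl
  · intro I J
    apply le_antisymm
    · exact sup_le (torsGen_mono (Set.image_mono Set.subset_union_left))
        (torsGen_mono (Set.image_mono Set.subset_union_right))
    · apply torsGen_le
      rw [Set.image_union]
      exact Set.union_subset
        ((subset_torsGen _).trans (Tors.le_def.mp le_sup_left))
        ((subset_torsGen _).trans (Tors.le_def.mp le_sup_right))
  · intro I J
    apply le_antisymm
    · rw [Tors.le_def]
      intro M hM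
      have hMI : M ∈ (torsGen (S '' I)).1 := Tors.le_def.mp inf_le_left hM
      have hMJ : M ∈ (torsGen (S '' J)).1 := Tors.le_def.mp inf_le_right hM
      apply hgen
      intro X hX hsub
      obtain ⟨i, hi, ⟨e⟩⟩ := hTI I hMI X hX hsub
      obtain ⟨j, hj, ⟨e'⟩⟩ := hTI J hMJ X hX hsub
      by_cases hij : i = j
      · exact ⟨i, ⟨hi, hij ▸ hj⟩, ⟨e⟩⟩
      · exact ((hpairwise i j hij).false (e.symm.trans e')).elim
    · exact le_inf (torsGen_mono (Set.image_mono Set.inter_subset_left))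
        (torsGen_mono (Set.image_mono Set.inter_subset_right))
  · apply Set.Subset.antisymm
    · have hZ : IsTorsionClass {M : ModA A | Subsingleton M.carrier} := by
        refine ⟨fun N h => h, ?_, ?_⟩
        · intro M N hM f hf
          haveI : Subsingleton M.carrier := hM
          exact hf.subsingleton
        · intro X Y Z f g hfi hgs he hX hZs
          haveI : Subsingleton X.carrier := hX
          haveI : Subsingleton Z.carrier := hZs
          have hz : ∀ y : Y.carrier, y = 0 := by
            intro y
            have h1 : y ∈ LinearMap.ker g := LinearMap.mem_ker.2 (Subsingleton.elim _ _)
            rw [← he] at h1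
            obtain ⟨x, rfl⟩ := h1
            rw [Subsingleton.elim x 0, map_zero]
          exact ⟨fun a b => (hz a).trans (hz b).symm⟩
      exact Tors.le_def.mp (torsGen_le (T := ⟨_, hZ⟩) (Set.empty_subset _))
    · intro M hM
      exact mem_torsGen_of_forall fun T _ => T.2.1 M hM
  · apply Set.eq_univ_of_forall
    intro M
    refine mem_torsionClass_of_simple_subquot (torsGen (Set.range S)).2 M ?_
    intro X hX _
    obtain ⟨i, ⟨e⟩⟩ := hcomplete X hX
    exact mem_of_linearEquiv (torsGen (Set.range S)).2 (subset_torsGen _ ⟨i, rfl⟩) e.symm
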